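/- Let R be the free abelian group with basis {[V(i,l)] : i ∈ ℤ, l ∈ ℕ} equipped with the commutative ring structure [V(i,l)]·[V(j,m)] = Σ_{t=0}^{min(l,m)} [V(i+j+t, l+m-2t)] and unit [V(0,0)]. Then R is isomorphic as a ring to ℤ[x, x^{-1}, y] via [V(1,0)] ↦ x, [V(-1,0)] ↦ x^{-1}, [V(0,1)] ↦ y, and under this isomorphism [V(i,k)] ↦ x^i f_k(x,y). -/

import Mathlib

set_option maxHeartbeats 800000
open Polynomial LaurentPolynomial


/-- Generalized Fibonacci polynomials in ℤ[x,y] (x = X 0, y = X 1):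
f_0 = 1, f_1 = y, f_k = y·f_{k-1} - x·f_{k-2}. -/
noncomputable def f2 : ℕ → MvPolynomial (Fin 2) ℤ
  | 0 => 1
  | 1 => MvPolynomial.X 1
  | k + 2 => MvPolynomial.X 1 * f2 (k + 1) - MvPolynomial.X 0 * f2 k


/-- ℤ[x,x⁻¹,y]: polynomials in y over Laurent polynomials in x. -/
abbrev LPoly : Type := Polynomial (LaurentPolynomial ℤ)

/-- The image of f_k(x,y) in ℤ[x,x⁻¹,y] (x ↦ C (T 1), y ↦ X). -/
noncomputable def f2L (k : ℕ) : LPoly :=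
  MvPolynomial.aeval ![Polynomial.C (LaurentPolynomial.T 1), Polynomial.X] (f2 k)

lemma f2L_zero : f2L 0 = 1 := by simp [f2L, f2]
lemma f2L_one : f2L 1 = X := by simp [f2L, f2]
lemma f2L_rec (k : ℕ) :
    f2L (k+2) = X * f2L (k+1) - Polynomial.C (T 1) * f2L k := by
  simp [f2L, f2]

lemma f2L_monic : ∀ k, (f2L k).Monic ∧ (f2L k).natDegree = k := by
  intro k
  induction k using Nat.strong_induction_on with
  | _ k ih =>
    match k with
    | 0 => rw [f2L_zero]; exact ⟨monic_one, natDegree_one⟩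
    | 1 => rw [f2L_one]; exact ⟨monic_X, natDegree_X⟩
    | (k+2) =>
      obtain ⟨m1, d1⟩ := ih (k+1) (by omega)
      obtain ⟨m0, d0⟩ := ih k (by omega)
      rw [f2L_rec, sub_eq_add_neg]
      have hm : (X * f2L (k+1)).Monic := monic_X.mul m1
      have hnd : (X * f2L (k+1)).natDegree = k + 2 := by
        rw [monic_X.natDegree_mul m1, natDegree_X, d1]; omega
      have hlt : (-(Polynomial.C (T (1:ℤ)) * f2L k)).degree < (X * f2L (k+1)).degree := by
        rw [degree_neg]
        refine degree_lt_degree ?_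
        rw [hnd]
        refine lt_of_le_of_lt natDegree_mul_le ?_
        simp [natDegree_C, d0]
      refine ⟨hm.add_of_left hlt, ?_⟩
      rw [natDegree_add_eq_left_of_degree_lt hlt, hnd]

noncomputable def Lmap : (ℕ →₀ LaurentPolynomial ℤ) →ₗ[LaurentPolynomial ℤ] LPoly :=
  Finsupp.linearCombination (LaurentPolynomial ℤ) f2L

lemma Lmap_inj : Function.Injective Lmap := by
  rw [injective_iff_map_eq_zero]
  intro c hc
  by_contra hne
  have hsupp : c.support.Nonempty := Finsupp.support_nonempty_iff.mpr hne
  set N := c.support.max' hsupp with hN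
  have hmem : N ∈ c.support := c.support.max'_mem hsupp
  have hcoeff : (Lmap c).coeff N = c N := by
    rw [Lmap, Finsupp.linearCombination_apply, Finsupp.sum, finset_sum_coeff]
    rw [Finset.sum_eq_single N]
    · have h1 := (f2L_monic N).1.coeff_natDegree
      rw [(f2L_monic N).2] at h1
      rw [coeff_smul, h1, smul_eq_mul, mul_one]
    · intro n hn hne'
      have hle : n ≤ N := c.support.le_max' n hn
      have : (f2L n).natDegree < N := by rw [(f2L_monic n).2]; omega
      rw [coeff_smul, coeff_eq_zero_of_natDegree_lt this, smul_zero]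
    · intro h; exact absurd hmem h
  rw [hc, coeff_zero] at hcoeff
  exact absurd hcoeff.symm (Finsupp.mem_support_iff.mp hmem)

lemma Lmap_surj : Function.Surjective Lmap := by
  have key : ∀ n (p : LPoly), p.natDegree ≤ n → p ∈ LinearMap.range Lmap := by
    intro n
    induction n with
    | zero =>
      intro p hp
      refine ⟨Finsupp.single 0 (p.coeff 0), ?_⟩
      rw [Lmap, Finsupp.linearCombination_single, f2L_zero, Polynomial.smul_eq_C_mul, mul_one]
      exact (eq_C_of_natDegree_le_zero hp).symm
    | succ n ih =>
      intro p hp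
      set q := p - (p.coeff (n+1)) • f2L (n+1) with hq
      have hqd : q.natDegree ≤ n := by
        rw [natDegree_le_iff_coeff_eq_zero]
        intro N hN
        rcases eq_or_lt_of_le (Nat.succ_le_of_lt hN) with h | h
        · have h1 := (f2L_monic (n+1)).1.coeff_natDegree
          rw [(f2L_monic (n+1)).2] at h1
          rw [hq, coeff_sub, coeff_smul, ← h]
          rw [show n.succ = n + 1 from rfl, h1, smul_eq_mul, mul_one, sub_self]
        · have e1 : p.coeff N = 0 := coeff_eq_zero_of_natDegree_lt (by omega)
          have e2 : (f2L (n+1)).coeff N = 0 :=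
            coeff_eq_zero_of_natDegree_lt (by rw [(f2L_monic (n+1)).2]; omega)
          rw [hq, coeff_sub, coeff_smul, e1, e2, smul_zero, sub_zero]
      have h1 : f2L (n+1) ∈ LinearMap.range Lmap :=
        ⟨Finsupp.single (n+1) 1, by rw [Lmap, Finsupp.linearCombination_single, one_smul]⟩
      have := LinearMap.range Lmap |>.add_mem (ih q hqd)
        ((LinearMap.range Lmap).smul_mem (p.coeff (n+1)) h1)
      simpa [hq] using this
  intro p; exact key p.natDegree p le_rfl

noncomputable def eL : (ℕ →₀ LaurentPolynomial ℤ) ≃ₗ[LaurentPolynomial ℤ] LPoly :=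
  LinearEquiv.ofBijective Lmap ⟨Lmap_inj, Lmap_surj⟩

noncomputable def cF : Module.Basis ℕ (LaurentPolynomial ℤ) LPoly := Module.Basis.ofRepr eL.symm

lemma cF_apply (k : ℕ) : cF k = f2L k := by
  have : cF k = (cF.repr).symm (Finsupp.single k 1) := (cF.repr_symm_single_one k).symm
  rw [this]
  show eL (Finsupp.single k 1) = f2L k
  show Lmap (Finsupp.single k 1) = f2L k
  rw [Lmap, Finsupp.linearCombination_single, one_smul]

noncomputable def bT : Module.Basis ℤ ℤ (LaurentPolynomial ℤ) := AddMonoidAlgebra.basis ℤ ℤ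

noncomputable def Bfull : Module.Basis (ℤ × ℕ) ℤ LPoly := bT.smulTower cF

lemma Bfull_apply (i : ℤ) (k : ℕ) :
    Bfull (i, k) = Polynomial.C (T (R := ℤ) i) * f2L k := by
  rw [Bfull, Module.Basis.smulTower_apply, cF_apply, Polynomial.smul_eq_C_mul]
  rfl

lemma cg : ∀ m l, m ≤ l → f2L l * f2L m =
    ∑ t ∈ Finset.range (m+1), (Polynomial.C (T (R := ℤ) 1))^t * f2L (l+m-2*t) := by
  intro m
  induction m using Nat.strong_induction_on with
  | _ m ih =>
    match m with
    | 0 => intro l _; simp [f2L_zero]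
    | 1 =>
      intro l hl
      obtain ⟨l', rfl⟩ : ∃ l', l = l' + 1 := ⟨l-1, by omega⟩
      rw [f2L_one, Finset.sum_range_succ, Finset.sum_range_one]
      rw [mul_comm, show X * f2L (l'+1) = f2L (l'+2) + Polynomial.C (T (R:=ℤ) 1) * f2L l' by
        rw [f2L_rec]; ring]
      norm_num
      exact Or.inl (by rw [show l' + 1 + 1 - 2 = l' by omega])
    | (m+2) =>
      intro l hl
      obtain ⟨l', rfl⟩ : ∃ l', l = l' + 1 := ⟨l-1, by omega⟩
      have hl' : m + 1 ≤ l' := by omega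
      have e1 : f2L (l'+1) * f2L (m+2)
          = f2L (l'+2) * f2L (m+1) + Polynomial.C (T (R:=ℤ) 1) * (f2L l' * f2L (m+1))
            - Polynomial.C (T (R:=ℤ) 1) * (f2L (l'+1) * f2L m) := by
        rw [f2L_rec m, f2L_rec l']; ring
      rw [e1, ih (m+1) (by omega) (l'+2) (by omega), ih (m+1) (by omega) l' (by omega),
        ih m (by omega) (l'+1) (by omega)]
      have hm2 : (∑ t ∈ Finset.range (m+2),
            (Polynomial.C (T (R:=ℤ) 1))^t * f2L (l'+(m+1)-2*t))
          = (∑ t ∈ Finset.range (m+1),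
              (Polynomial.C (T (R:=ℤ) 1))^t * f2L ((l'+1)+m-2*t))
            + (Polynomial.C (T (R:=ℤ) 1))^(m+1) * f2L (l'-(m+1)) := by
        rw [Finset.sum_range_succ]
        congr 1
        · exact Finset.sum_congr rfl (fun t ht => by congr 2; omega)
        · congr 2; omega
      have hT : (∑ t ∈ Finset.range (m+2+1),
            (Polynomial.C (T (R:=ℤ) 1))^t * f2L ((l'+1)+(m+2)-2*t))
          = (∑ t ∈ Finset.range (m+2),
              (Polynomial.C (T (R:=ℤ) 1))^t * f2L ((l'+2)+(m+1)-2*t))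
            + (Polynomial.C (T (R:=ℤ) 1))^(m+2) * f2L (l'-(m+1)) := by
        rw [Finset.sum_range_succ]
        refine congrArg₂ (· + ·) ?_ ?_
        · exact Finset.sum_congr rfl (fun t ht => by congr 2; omega)
        · congr 2; omega
      rw [hm2, hT]
      ring

lemma cg' (l m : ℕ) : f2L l * f2L m =
    ∑ t ∈ Finset.range (min l m + 1), (Polynomial.C (T (R := ℤ) 1))^t * f2L (l+m-2*t) := by
  rcases le_total m l with h | h
  · rw [min_eq_right h]; exact cg m l h
  · rw [min_eq_left h, mul_comm, cg l m h]
    exact Finset.sum_congr rfl (fun t ht => by rw [Nat.add_comm m l])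

open Finset in
/-- the Green ring of the infinite linear quiver (free abelian
group on [V(i,l)], i ∈ ℤ, l ∈ ℕ, with product
[V(i,l)]·[V(j,m)] = Σ_{t=0}^{min(l,m)} [V(i+j+t, l+m-2t)], unit [V(0,0)])
is isomorphic to ℤ[x,x⁻¹,y] via [V(1,0)] ↦ x, [V(-1,0)] ↦ x⁻¹,
[V(0,1)] ↦ y, and [V(i,k)] ↦ x^i f_k(x,y).  We encode the Green ring as the
free ℤ-module (ℤ × ℕ) →₀ ℤ with [V(i,l)] = single (i,l) 1 and record that the
linear isomorphism sends [V(i,k)] to x^i f_k and transports the Clebsch–Gordan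
multiplication to the ring multiplication of ℤ[x,x⁻¹,y]. -/
theorem green_ring_infinite_linear_q_one :
    ∃ e : ((ℤ × ℕ) →₀ ℤ) ≃ₗ[ℤ] LPoly,
      (∀ (i : ℤ) (k : ℕ),
        e (Finsupp.single (i, k) 1) =
          Polynomial.C (LaurentPolynomial.T (R := ℤ) i) * f2L k) ∧
      (∀ (i j : ℤ) (l m : ℕ),
        e (Finsupp.single (i, l) 1) * e (Finsupp.single (j, m) 1) =
          e (∑ t ∈ Finset.range (min l m + 1),
            Finsupp.single (i + j + (t : ℤ), l + m - 2 * t) 1)) := by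
  refine ⟨Bfull.repr.symm, fun i k => ?_, fun i j l m => ?_⟩
  · rw [Module.Basis.repr_symm_single_one, Bfull_apply]
  · have h1 : ∀ (i : ℤ) (k : ℕ), Bfull.repr.symm (Finsupp.single (i, k) 1)
        = Polynomial.C (T (R := ℤ) i) * f2L k := fun i k => by
      rw [Module.Basis.repr_symm_single_one, Bfull_apply]
    rw [map_sum]
    simp only [h1]
    have hterm : ∀ t : ℕ, Polynomial.C (T (R := ℤ) (i + j + (t : ℤ)))
        = Polynomial.C (T (R := ℤ) i) * Polynomial.C (T (R := ℤ) j)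
          * (Polynomial.C (T (R := ℤ) 1))^t := by
      intro t
      rw [T_add, T_add, map_mul, map_mul, ← map_pow, T_pow, mul_one]
    calc (Polynomial.C (T (R := ℤ) i) * f2L l) * (Polynomial.C (T (R := ℤ) j) * f2L m)
        = Polynomial.C (T (R := ℤ) i) * Polynomial.C (T (R := ℤ) j)
            * (f2L l * f2L m) := by ring
      _ = ∑ t ∈ Finset.range (min l m + 1),
            Polynomial.C (T (R := ℤ) i) * Polynomial.C (T (R := ℤ) j)
              * ((Polynomial.C (T (R := ℤ) 1))^t * f2L (l+m-2*t)) := by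
          rw [cg', Finset.mul_sum]
      _ = _ := Finset.sum_congr rfl (fun t _ => by rw [hterm t]; ring)
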